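/- arXiv:1210.0101 — 2 statements merged into one kernel-verified Lean document; each statement's English description precedes it below -/
import Mathlib

section
/- Let d ≥ 2 and let γ, δ : ℝ → (Fin d → ℝ) be differentiable curves that are well-parametrized and timelike, i.e., for every t ∈ ℝ the derivative vector u = γ′(t) satisfies (u 0)² − ((u 1)² + … + (u (d−1))²) = 1, and likewise for δ′(t). If the range of γ equals the range of δ, then there exist ε ∈ {−1, 1} and c ∈ ℝ such that δ(t) = γ(ε·t + c) for all t ∈ ℝ. -/
open Finset

/-- A differentiable real function whose derivative always has absolute value ≥ 1
has a derivative of constant sign (Darboux). -/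
private lemma deriv_sign_const (f : ℝ → ℝ) (hf : Differentiable ℝ f)
    (h : ∀ t : ℝ, 1 ≤ |deriv f t|) :
    (∀ t : ℝ, 1 ≤ deriv f t) ∨ (∀ t : ℝ, deriv f t ≤ -1) := by
  have habs : ∀ t : ℝ, 1 ≤ deriv f t ∨ deriv f t ≤ -1 := by
    intro t
    rcases abs_cases (deriv f t) with ⟨h1, _⟩ | ⟨h1, _⟩
    · left; have := h t; linarith
    · right; have := h t; linarith
  have key : ∀ a b : ℝ, 1 ≤ deriv f a → deriv f b ≤ -1 → False := by
    intro a b ha hb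
    have hd : ∀ x ∈ Set.Icc (min a b) (max a b),
        HasDerivWithinAt f (deriv f x) (Set.Icc (min a b) (max a b)) x :=
      fun x _ => (hf x).hasDerivAt.hasDerivWithinAt
    rcases le_total a b with hab | hab
    · have : (0:ℝ) ∈ deriv f '' Set.Ioo (min a b) (max a b) := by
        apply exists_hasDerivWithinAt_eq_of_lt_of_gt (min_le_max) hd
        · rw [min_eq_left hab]; linarith
        · rw [max_eq_right hab]; linarith
      obtain ⟨c, _, hc⟩ := this
      have := h c; rw [hc] at this; simp at this; linarith
    · have : (0:ℝ) ∈ deriv f '' Set.Ioo (min a b) (max a b) := by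
        apply exists_hasDerivWithinAt_eq_of_gt_of_lt (min_le_max) hd
        · rw [min_eq_right hab]; linarith
        · rw [max_eq_left hab]; linarith
      obtain ⟨c, _, hc⟩ := this
      have := h c; rw [hc] at this; simp at this; linarith
  rcases habs 0 with h0 | h0
  · left; intro t
    rcases habs t with ht | ht
    · exact ht
    · exact absurd (key 0 t h0 ht) (fun h => h)
  · right; intro t
    rcases habs t with ht | ht
    · exact absurd (key t 0 ht h0) (fun h => h)
    · exact ht

private lemma key_lemma (d : ℕ) (hd : 2 ≤ d)
    (γ δ : ℝ → (Fin d → ℝ)) (hγ : Differentiable ℝ γ) (hδ : Differentiable ℝ δ)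
    (hγwp : ∀ t : ℝ, (deriv γ t ⟨0, by linarith⟩) ^ 2 -
      ∑ i ∈ Finset.univ.erase (⟨0, by linarith⟩ : Fin d), (deriv γ t i) ^ 2 = 1)
    (hδwp : ∀ t : ℝ, (deriv δ t ⟨0, by linarith⟩) ^ 2 -
      ∑ i ∈ Finset.univ.erase (⟨0, by linarith⟩ : Fin d), (deriv δ t i) ^ 2 = 1)
    (hpos : ∀ t : ℝ, 1 ≤ deriv γ t ⟨0, by linarith⟩)
    (hran : Set.range γ = Set.range δ) :
    ∃ ε : ℝ, (ε = -1 ∨ ε = 1) ∧ ∃ c : ℝ, ∀ t : ℝ, δ t = γ (ε * t + c) := by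
  set e0 : Fin d := ⟨0, by linarith⟩ with he0
  set γ₀ : ℝ → ℝ := fun t => γ t e0 with hγ₀
  set δ₀ : ℝ → ℝ := fun t => δ t e0 with hδ₀
  have hγ₀d : ∀ t : ℝ, HasDerivAt γ₀ (deriv γ t e0) t :=
    fun t => (hasDerivAt_pi.mp (hγ t).hasDerivAt) e0
  have hδ₀d : ∀ t : ℝ, HasDerivAt δ₀ (deriv δ t e0) t :=
    fun t => (hasDerivAt_pi.mp (hδ t).hasDerivAt) e0
  have hγ₀deriv : ∀ t : ℝ, deriv γ₀ t = deriv γ t e0 := fun t => (hγ₀d t).deriv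
  -- γ₀ strictly monotone
  have hmono : StrictMono γ₀ := by
    apply strictMono_of_deriv_pos
    intro t; rw [hγ₀deriv t]; linarith [hpos t]
  -- γ₀ grows at least linearly
  have hlin : ∀ s t : ℝ, s ≤ t → γ₀ s + (t - s) ≤ γ₀ t := by
    intro s t hst
    have hmon : Monotone (fun t => γ₀ t - t) := by
      apply monotone_of_deriv_nonneg
      · exact Differentiable.sub (fun x => (hγ₀d x).differentiableAt) differentiable_fun_id
      · intro x
        have hD : HasDerivAt (fun t => γ₀ t - t) (deriv γ x e0 - 1) x :=
          (hγ₀d x).sub (hasDerivAt_id x)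
        rw [hD.deriv]
        linarith [hpos x]
    have := hmon hst
    simp only at this
    linarith
  -- γ₀ surjective
  have hsurj : Function.Surjective γ₀ := by
    intro y
    set a : ℝ := min 0 (y - γ₀ 0) with ha
    set b : ℝ := max 0 (y - γ₀ 0) with hb
    have hab : a ≤ b := min_le_max
    have hya : γ₀ a ≤ y := by
      have := hlin a 0 (min_le_left _ _)
      have h2 : a ≤ y - γ₀ 0 := min_le_right _ _
      linarith
    have hyb : y ≤ γ₀ b := by
      have := hlin 0 b (le_max_left _ _)
      have h2 : y - γ₀ 0 ≤ b := le_max_right _ _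
      linarith
    have hcont : ContinuousOn γ₀ (Set.Icc a b) :=
      (fun x _ => (hγ₀d x).differentiableAt.continuousAt.continuousWithinAt)
    have := intermediate_value_Icc hab hcont (Set.mem_Icc.mpr ⟨hya, hyb⟩)
    obtain ⟨x, _, hx⟩ := this
    exact ⟨x, hx⟩
  -- inverse of γ₀
  set e : ℝ ≃o ℝ := StrictMono.orderIsoOfSurjective γ₀ hmono hsurj with he
  set g : ℝ → ℝ := fun y => e.symm y with hg
  have hginv : ∀ y : ℝ, γ₀ (g y) = y := fun y =>
    StrictMono.orderIsoOfSurjective_self_symm_apply γ₀ hmono hsurj y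
  have hgleft : ∀ t : ℝ, g (γ₀ t) = t := fun t =>
    StrictMono.orderIsoOfSurjective_symm_apply_self γ₀ hmono hsurj t
  have hgcont : Continuous g := (OrderIso.continuous e.symm)
  have hgD : ∀ y : ℝ, HasDerivAt g ((deriv γ (g y) e0)⁻¹) y := by
    intro y
    apply HasDerivAt.of_local_left_inverse hgcont.continuousAt (hγ₀d (g y))
    · have := hpos (g y); intro h; rw [h] at this; linarith
    · exact Filter.Eventually.of_forall hginv
  -- the reparametrization
  set σ : ℝ → ℝ := fun t => g (δ₀ t) with hσ
  have hσγ : ∀ t : ℝ, γ (σ t) = δ t := by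
    intro t
    have : δ t ∈ Set.range γ := hran ▸ Set.mem_range_self t
    obtain ⟨s, hs⟩ := this
    have h0 : γ₀ s = δ₀ t := by rw [hγ₀, hδ₀]; simp only; rw [hs]
    have : σ t = s := by rw [hσ]; simp only; rw [← h0, hgleft]
    rw [this, hs]
  have hσd : ∀ t : ℝ, HasDerivAt σ ((deriv γ (σ t) e0)⁻¹ * deriv δ t e0) t := by
    intro t
    exact HasDerivAt.comp t (hgD (δ₀ t)) (hδ₀d t)
  have hσdiff : Differentiable ℝ σ := fun t => (hσd t).differentiableAt
  -- chain rule: deriv δ t = deriv σ t • deriv γ (σ t)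
  have hchain : ∀ t : ℝ, deriv δ t = deriv σ t • deriv γ (σ t) := by
    intro t
    have h1 : HasDerivAt (fun s => γ (σ s)) (deriv σ t • deriv γ (σ t)) t :=
      HasDerivAt.scomp t (hγ (σ t)).hasDerivAt (hσdiff t).hasDerivAt
    have h2 : (fun s => γ (σ s)) = δ := funext hσγ
    rw [h2] at h1
    exact h1.deriv
  -- the derivative of σ squares to 1
  have hσsq : ∀ t : ℝ, (deriv σ t) ^ 2 = 1 := by
    intro t
    have h1 := hδwp t
    rw [hchain t] at h1
    simp only [Pi.smul_apply, smul_eq_mul, mul_pow] at h1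
    rw [← Finset.mul_sum] at h1
    have h2 := hγwp (σ t)
    set a := deriv σ t
    set u0 := deriv γ (σ t) e0
    set S := ∑ i ∈ Finset.univ.erase e0, (deriv γ (σ t) i) ^ 2
    nlinarith [h1, h2]
  have hσabs : ∀ t : ℝ, 1 ≤ |deriv σ t| := by
    intro t
    have := hσsq t
    rcases abs_cases (deriv σ t) with ⟨h1, _⟩ | ⟨h1, _⟩ <;> nlinarith
  -- σ' is constantly 1 or constantly -1
  have hcases := deriv_sign_const σ hσdiff hσabs
  have hconst : ∃ ε : ℝ, (ε = -1 ∨ ε = 1) ∧ ∀ t : ℝ, deriv σ t = ε := by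
    rcases hcases with hp | hn
    · exact ⟨1, Or.inr rfl, fun t => by nlinarith [hσsq t, hp t]⟩
    · exact ⟨-1, Or.inl rfl, fun t => by nlinarith [hσsq t, hn t]⟩
  obtain ⟨ε, hε, hεd⟩ := hconst
  refine ⟨ε, hε, σ 0, ?_⟩
  intro t
  -- σ t = ε * t + σ 0
  have hlinσ : ∀ t : ℝ, σ t = ε * t + σ 0 := by
    have hc : ∀ x y : ℝ, (fun s => σ s - ε * s) x = (fun s => σ s - ε * s) y := by
      apply is_const_of_deriv_eq_zero
      · exact hσdiff.sub (differentiable_fun_id.const_mul ε)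
      · intro x
        rw [deriv_fun_sub (hσdiff x) ((differentiable_fun_id.const_mul ε) x),
          deriv_const_mul ε differentiableAt_fun_id, deriv_id'', hεd]
        ring
    intro s
    have := hc s 0
    simp only at this
    linarith
  rw [← hσγ t, hlinσ t]

open Finset in
/-- Two well-parametrized timelike curves in `ℝ^d` (`d ≥ 2`) with the
same range are reparametrizations of each other by `t ↦ ε t + c` with `ε = ±1`. -/
theorem wellParametrized_timelike_same_range (d : ℕ) (hd : 2 ≤ d)
    (γ δ : ℝ → (Fin d → ℝ)) (hγ : Differentiable ℝ γ) (hδ : Differentiable ℝ δ)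
    (hγwp : ∀ t : ℝ, (deriv γ t ⟨0, by omega⟩) ^ 2 -
      ∑ i ∈ Finset.univ.erase (⟨0, by omega⟩ : Fin d), (deriv γ t i) ^ 2 = 1)
    (hδwp : ∀ t : ℝ, (deriv δ t ⟨0, by omega⟩) ^ 2 -
      ∑ i ∈ Finset.univ.erase (⟨0, by omega⟩ : Fin d), (deriv δ t i) ^ 2 = 1)
    (hran : Set.range γ = Set.range δ) :
    ∃ ε : ℝ, (ε = -1 ∨ ε = 1) ∧ ∃ c : ℝ, ∀ t : ℝ, δ t = γ (ε * t + c) := by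
  set e0 : Fin d := ⟨0, by omega⟩ with he0
  set γ₀ : ℝ → ℝ := fun t => γ t e0 with hγ₀
  have hγ₀d : ∀ t : ℝ, HasDerivAt γ₀ (deriv γ t e0) t :=
    fun t => (hasDerivAt_pi.mp (hγ t).hasDerivAt) e0
  have hγ₀diff : Differentiable ℝ γ₀ := fun t => (hγ₀d t).differentiableAt
  have hγ₀deriv : ∀ t : ℝ, deriv γ₀ t = deriv γ t e0 := fun t => (hγ₀d t).deriv
  have habs : ∀ t : ℝ, 1 ≤ |deriv γ₀ t| := by
    intro t
    rw [hγ₀deriv t]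
    have h1 := hγwp t
    have hS : 0 ≤ ∑ i ∈ Finset.univ.erase e0, (deriv γ t i) ^ 2 :=
      Finset.sum_nonneg (fun i _ => sq_nonneg _)
    rcases abs_cases (deriv γ t e0) with ⟨h2, _⟩ | ⟨h2, _⟩ <;> nlinarith
  rcases deriv_sign_const γ₀ hγ₀diff habs with hp | hn
  · exact key_lemma d hd γ δ hγ hδ hγwp hδwp
      (fun t => by have := hp t; rwa [hγ₀deriv t] at this) hran
  · -- consider γ ∘ neg
    set γ' : ℝ → (Fin d → ℝ) := fun t => γ (-t) with hγ'
    have hγ'diff : Differentiable ℝ γ' := hγ.comp differentiable_neg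
    have hγ'd : ∀ t : ℝ, HasDerivAt γ' ((-1 : ℝ) • deriv γ (-t)) t := by
      intro t
      exact HasDerivAt.scomp t (hγ (-t)).hasDerivAt (hasDerivAt_neg t)
    have hγ'deriv : ∀ t : ℝ, deriv γ' t = (-1 : ℝ) • deriv γ (-t) :=
      fun t => (hγ'd t).deriv
    have hγ'wp : ∀ t : ℝ, (deriv γ' t ⟨0, by omega⟩) ^ 2 -
        ∑ i ∈ Finset.univ.erase (⟨0, by omega⟩ : Fin d), (deriv γ' t i) ^ 2 = 1 := by
      intro t
      rw [hγ'deriv t]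
      simp only [Pi.smul_apply, smul_eq_mul]
      have hkey : ∀ x : ℝ, ((-1 : ℝ) * x) ^ 2 = x ^ 2 := fun x => by ring
      simp only [hkey]
      exact hγwp (-t)
    have hγ'pos : ∀ t : ℝ, 1 ≤ deriv γ' t ⟨0, by omega⟩ := by
      intro t
      rw [hγ'deriv t]
      have := hn (-t)
      rw [hγ₀deriv (-t)] at this
      simp only [Pi.smul_apply, smul_eq_mul, neg_one_mul, ← he0]
      linarith
    have hran' : Set.range γ' = Set.range δ := by
      rw [← hran, hγ']
      exact neg_surjective.range_comp γ
    obtain ⟨ε, hε, c, hc⟩ := key_lemma d hd γ' δ hγ'diff hδ hγ'wp hδwp hγ'pos hran'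
    refine ⟨-ε, ?_, -c, ?_⟩
    · rcases hε with h | h
      · right; rw [h]; norm_num
      · left; rw [h]
    · intro t
      have harg : -ε * t + -c = -(ε * t + c) := by ring
      rw [harg, hc t]
end

section
/- Let S, C : ℝ → ℝ be differentiable functions such that for all t ∈ ℝ: C(t)² − S(t)² = 1 and (S′(t))² − (C′(t))² = 1, with S(0) = 0, C(0) = 1, and S strictly increasing. Then S′(t) = C(t) and C′(t) = S(t) for all t ∈ ℝ. -/
/-- If `C² − S² = 1`, `(S')² − (C')² = 1`, `S 0 = 0`, `C 0 = 1`
and `S` is strictly increasing, then `S' = C` and `C' = S`. -/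
theorem deriv_of_hyperbolic_pair (S C : ℝ → ℝ)
    (hS : Differentiable ℝ S) (hC : Differentiable ℝ C)
    (hsq : ∀ t : ℝ, C t ^ 2 - S t ^ 2 = 1)
    (hwp : ∀ t : ℝ, (deriv S t) ^ 2 - (deriv C t) ^ 2 = 1)
    (hS0 : S 0 = 0) (hC0 : C 0 = 1) (hmono : StrictMono S) :
    ∀ t : ℝ, deriv S t = C t ∧ deriv C t = S t := by
  -- C is never zero
  have hCne : ∀ t : ℝ, C t ≠ 0 := by
    intro t h
    have := hsq t
    nlinarith [sq_nonneg (S t)]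
  -- C is positive everywhere (IVT)
  have hCpos : ∀ t : ℝ, 0 < C t := by
    intro t
    by_contra h
    push_neg at h
    have hlt : C t < 0 := lt_of_le_of_ne h (hCne t)
    have hmem : (0 : ℝ) ∈ Set.uIcc (C 0) (C t) := by
      rw [hC0]
      exact Set.mem_uIcc.2 (Or.inr ⟨hlt.le, zero_le_one⟩)
    obtain ⟨s, _, hs⟩ := intermediate_value_uIcc
      (hC.continuous.continuousOn (s := Set.uIcc 0 t)) hmem
    exact hCne s hs
  -- key identity: C * C' = S * S'
  have key : ∀ t : ℝ, C t * deriv C t = S t * deriv S t := by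
    intro t
    have h1 : HasDerivAt (fun t => C t ^ 2 - S t ^ 2)
        (2 * C t * deriv C t - 2 * S t * deriv S t) t := by
      have hc := ((hC t).hasDerivAt.pow 2)
      have hs := ((hS t).hasDerivAt.pow 2)
      simpa [mul_comm, mul_assoc, mul_left_comm, Pi.sub_def, Pi.pow_def] using hc.sub hs
    have h2 : HasDerivAt (fun t => C t ^ 2 - S t ^ 2) 0 t := by
      have : (fun t => C t ^ 2 - S t ^ 2) = fun _ => (1 : ℝ) := by
        funext x; exact hsq x
      rw [this]; exact hasDerivAt_const t 1
    have := h1.unique h2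
    linarith
  -- S' is nonnegative since S is monotone
  have hS'nonneg : ∀ t : ℝ, 0 ≤ deriv S t := by
    intro t
    have htend : Filter.Tendsto (slope S t) (nhdsWithin t {t}ᶜ) (nhds (deriv S t)) :=
      hasDerivAt_iff_tendsto_slope.1 (hS t).hasDerivAt
    refine ge_of_tendsto htend ?_
    filter_upwards [self_mem_nhdsWithin] with x hx
    simp only [slope_def_field, div_eq_mul_inv]
    rw [← div_eq_mul_inv]
    rcases lt_or_gt_of_ne (show x ≠ t from hx) with h | h
    · have hnum : S x < S t := hmono h
      exact div_nonneg_iff.2 (Or.inr ⟨by linarith, by linarith⟩)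
    · have hnum : S t < S x := hmono h
      exact div_nonneg_iff.2 (Or.inl ⟨by linarith, by linarith⟩)
  intro t
  have h1 := hsq t
  have h2 := hwp t
  have h3 := key t
  have h4 := hCpos t
  have h5 := hS'nonneg t
  -- (S')² = C², then S' = C since both sides have the right sign
  have h6 : (C t * deriv C t) ^ 2 = (S t * deriv S t) ^ 2 := by rw [h3]
  have h8 : deriv S t ^ 2 * C t ^ 2 - S t ^ 2 * deriv S t ^ 2 = C t ^ 2 := by
    linear_combination h6 + C t ^ 2 * h2
  have hsq' : deriv S t ^ 2 = C t ^ 2 := by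
    linear_combination h8 - deriv S t ^ 2 * h1
  have hfac : (deriv S t - C t) * (deriv S t + C t) = 0 := by linear_combination hsq'
  have hSC : deriv S t = C t := by
    rcases mul_eq_zero.1 hfac with h | h
    · linarith
    · linarith
  refine ⟨hSC, ?_⟩
  rw [hSC] at h3
  have := mul_left_cancel₀ (hCne t) (h3.trans (mul_comm (S t) (C t)))
  exact this
end
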